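/- arXiv:2408.14124 — 5 statements merged into one kernel-verified Lean document; each statement's English description precedes it below -/
import Mathlib

section
/- Let q ∈ ℕ, q > 0, and p, q', p' ∈ ℤ with q' > 0 and qp' - pq' = 1. Suppose x : ℤ → ℝ satisfies T_{q,p} x = x and x ≪ T_{q',p'} x (meaning x_n < (T_{q',p'} x)_n for every n). Then the chain x ≪ T_{q',p'} x ≪ T_{q',p'}² x ≪ ⋯ ≪ T_{q',p'}^q x = x + 1 holds, i.e., T_{q',p'}^j x ≪ T_{q',p'}^{j+1} x for 0 ≤ j < q and T_{q',p'}^q x = x + 1. -/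
/-- translation `(T_{q,p} x)_n = x_{n-q} + p` -/
def Ttrans (q p : ℤ) (x : ℤ → ℝ) : ℤ → ℝ := fun n => x (n - q) + p

lemma Ttrans_iter (q' p' : ℤ) (x : ℤ → ℝ) :
    ∀ j : ℕ, ∀ n : ℤ, ((Ttrans q' p')^[j] x) n = x (n - j * q') + j * p' := by
  intro j
  induction j with
  | zero => intro n; simp
  | succ j ih =>
    intro n
    rw [Function.iterate_succ_apply']
    show ((Ttrans q' p')^[j] x) (n - q') + p' = _
    rw [ih]
    push_cast
    ring_nf

theorem stmt2 (q : ℕ) (hq : 0 < q) (p q' p' : ℤ) (hq' : 0 < q')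
    (hFarey : (q : ℤ) * p' - p * q' = 1) (x : ℤ → ℝ)
    (hx : Ttrans (q : ℤ) p x = x)
    (hlt : ∀ n : ℤ, x n < Ttrans q' p' x n) :
    (∀ j : ℕ, j < q →
        ∀ n : ℤ, ((Ttrans q' p')^[j] x) n < ((Ttrans q' p')^[j + 1] x) n) ∧
      (Ttrans q' p')^[q] x = fun n => x n + 1 := by
  have hshift : ∀ m : ℤ, x (m - q) = x m - p := by
    intro m
    have := congrFun hx m
    simp [Ttrans] at this
    linarith
  have hshiftk : ∀ k : ℕ, ∀ m : ℤ, x (m - k * q) = x m - k * p := by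
    intro k
    induction k with
    | zero => intro m; simp
    | succ k ih =>
      intro m
      have : m - (k + 1 : ℕ) * (q : ℤ) = (m - k * q) - q := by push_cast; ring
      rw [this, hshift, ih]
      push_cast; ring
  constructor
  · intro j _ n
    rw [Ttrans_iter, Ttrans_iter]
    have := hlt (n - j * q')
    simp only [Ttrans] at this
    have h2 : n - ((j : ℤ) + 1) * q' = n - j * q' - q' := by ring
    push_cast
    rw [h2]
    push_cast at this
    linarith
  · funext n
    rw [Ttrans_iter]
    have : n - (q : ℤ) * q' = n - (q' : ℤ).toNat * q := by
      rw [Int.toNat_of_nonneg hq'.le]; ring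
    rw [this, hshiftk]
    have : (q : ℝ) * p' - p * q' = 1 := by exact_mod_cast hFarey
    have h3 : ((q'.toNat : ℝ)) = (q' : ℝ) := by exact_mod_cast Int.toNat_of_nonneg hq'.le
    rw [h3]
    linarith
end

section
/- Let h : ℝ × ℝ → ℝ be continuous with h(x+1, x'+1) = h(x, x'), let F > 0, and set h_F(x, x') = h(x, x') - Fx. For s > 0 define E₁(s) = sup{|h(x, x'+1) - h(x, x')| : |x' - x| ≤ s} and E₂(s) = sup{|h(x+1, x') - h(x, x')| : |x' - x| ≤ s}. Then for any finite segment x₀, x₁, …, x_L with |x_{i+1} - x_i| ≤ s for all i, the modified segment x₀, x₁+1, …, x_{L-1}+1, x_L satisfies W̃ - W ≤ E₁(s) + E₂(s) - (L-2)F, where W = Σ_{i=0}^{L-1} h_F(x_i, x_{i+1}) and W̃ is the corresponding sum for the modified segment. In particular, if L > 2 + (E₁(s)+E₂(s))/F then W̃ < W, so no configuration with spacings bounded by s minimises the tilted energy over segments of length greater than 2 + (E₁(s)+E₂(s))/F. -/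
noncomputable def xtf (L : ℕ) (x : ℕ → ℝ) : ℕ → ℝ :=
  fun i => if 1 ≤ i ∧ i ≤ L - 1 then x i + 1 else x i

theorem stmt5 (h : ℝ → ℝ → ℝ)
    (hcont : Continuous fun p : ℝ × ℝ => h p.1 p.2)
    (hper : ∀ x x' : ℝ, h (x + 1) (x' + 1) = h x x')
    (F : ℝ) (hF : 0 < F) (s : ℝ) (hs : 0 < s) (E1 E2 : ℝ)
    (hE1 : ∀ x x' : ℝ, |x' - x| ≤ s → |h x (x' + 1) - h x x'| ≤ E1)
    (hE2 : ∀ x x' : ℝ, |x' - x| ≤ s → |h (x + 1) x' - h x x'| ≤ E2)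
    (L : ℕ) (hL : 2 ≤ L) (x : ℕ → ℝ) (hx : ∀ i < L, |x (i + 1) - x i| ≤ s) :
    letI xt : ℕ → ℝ := fun i => if 1 ≤ i ∧ i ≤ L - 1 then x i + 1 else x i
    letI W : ℝ := ∑ i ∈ Finset.range L, (h (x i) (x (i + 1)) - F * x i)
    letI Wt : ℝ := ∑ i ∈ Finset.range L, (h (xt i) (xt (i + 1)) - F * xt i)
    Wt - W ≤ E1 + E2 - ((L : ℝ) - 2) * F ∧
      ((L : ℝ) > 2 + (E1 + E2) / F → Wt < W) := by
  change (∑ i ∈ Finset.range L, (h (xtf L x i) (xtf L x (i + 1)) - F * xtf L x i)) -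
      (∑ i ∈ Finset.range L, (h (x i) (x (i + 1)) - F * x i)) ≤ E1 + E2 - ((L : ℝ) - 2) * F ∧
      ((L : ℝ) > 2 + (E1 + E2) / F →
        (∑ i ∈ Finset.range L, (h (xtf L x i) (xtf L x (i + 1)) - F * xtf L x i)) <
          ∑ i ∈ Finset.range L, (h (x i) (x (i + 1)) - F * x i))
  set xt := xtf L x with hxtdef
  set W := ∑ i ∈ Finset.range L, (h (x i) (x (i + 1)) - F * x i) with hW
  set Wt := ∑ i ∈ Finset.range L, (h (xt i) (xt (i + 1)) - F * xt i) with hWt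
  have hxt : ∀ i, xt i = if 1 ≤ i ∧ i ≤ L - 1 then x i + 1 else x i := fun _ => rfl
  have hLR : (2:ℝ) ≤ (L:ℝ) := by exact_mod_cast hL
  have key : Wt - W ≤ E1 + E2 - ((L:ℝ) - 1) * F := by
    have hdiff : Wt - W = ∑ i ∈ Finset.range L,
        ((h (xt i) (xt (i + 1)) - F * xt i) - (h (x i) (x (i + 1)) - F * x i)) := by
      rw [hW, hWt, ← Finset.sum_sub_distrib]
    rw [hdiff]
    have hb : ∀ i ∈ Finset.range L,
        (h (xt i) (xt (i + 1)) - F * xt i) - (h (x i) (x (i + 1)) - F * x i)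
          ≤ -F + (if i = 0 then E1 + F else 0) + (if i = L - 1 then E2 else 0) := by
      intro i hi
      rw [Finset.mem_range] at hi
      by_cases h0 : i = 0
      · subst h0
        rw [if_pos rfl, if_neg (by omega : ¬ (0 = L - 1))]
        rw [hxt 0, if_neg (by omega), hxt 1, if_pos (by omega)]
        have := hE1 (x 0) (x 1) (hx 0 (by omega))
        have := abs_le.1 this
        linarith [this.2]
      · by_cases h1 : i = L - 1
        · subst h1
          rw [if_neg h0, if_pos rfl]
          rw [hxt (L-1), if_pos (by omega), hxt (L-1+1), if_neg (by omega)]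
          have hL1 : L - 1 + 1 = L := by omega
          rw [hL1]
          have hxL : x L = x (L - 1 + 1) := by rw [hL1]
          have := hE2 (x (L-1)) (x (L-1+1)) (hx (L-1) (by omega))
          have h2 := (abs_le.1 this).2
          rw [hL1] at h2
          linarith
        · rw [if_neg h0, if_neg h1]
          rw [hxt i, if_pos (by omega), hxt (i+1), if_pos (by omega)]
          rw [hper]
          ring_nf
          linarith
    have hsum := Finset.sum_le_sum hb
    refine hsum.trans ?_
    rw [Finset.sum_add_distrib, Finset.sum_add_distrib]
    rw [Finset.sum_ite_eq' (Finset.range L) 0 (fun _ => E1 + F)]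
    rw [Finset.sum_ite_eq' (Finset.range L) (L-1) (fun _ => E2)]
    rw [if_pos (Finset.mem_range.2 (by omega)), if_pos (Finset.mem_range.2 (by omega))]
    rw [Finset.sum_const, Finset.card_range]
    push_cast
    ring_nf
    linarith
  constructor
  · have : ((L:ℝ) - 2) * F ≤ ((L:ℝ) - 1) * F := by nlinarith
    linarith
  · intro hgt
    have : E1 + E2 < ((L:ℝ) - 2) * F := by
      have := (div_lt_iff₀ hF).1 (by linarith : (E1 + E2) / F < (L:ℝ) - 2)
      linarith
    linarith
end

section
/- Let p, q be integers, q > 0. Let x⁻, x⁺, x* : ℤ → ℝ with x⁻, x⁺ of type (p,q) (T_{q,p}x^± = x^±), x⁻ ≪ x* ≪ x⁺, and suppose the translates satisfy T_{q,p}^k x* → x⁻ pointwise as k → +∞ and T_{q,p}^{-k} x* → x⁺ pointwise as k → +∞, with T_{q,p} x* ≤ x*. Then the telescoping identity Σ_{i∈ℤ} ((T_{q,p}^{-1} x*)_i − x*_i) = Σ_{i=1}^{q} (x⁺_i − x⁻_i) holds, and in particular this sum is finite. Consequently, for any configuration z with x* ≤ z ≤ T_{q,p}^{-1} x*, the sequence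 (z_i − x*_i)_{i∈ℤ} is summable and lies in ℓ². -/
open Finset Filter

theorem stmt9 (q p : ℤ) (hq : 0 < q) (xm xp xs : ℤ → ℝ)
    (hxm : ∀ n : ℤ, xm (n - q) + p = xm n) (hxp : ∀ n : ℤ, xp (n - q) + p = xp n)
    (horder : ∀ n : ℤ, xm n < xs n ∧ xs n < xp n)
    (hmono : ∀ n : ℤ, xs (n - q) + p ≤ xs n)
    (hlimm : ∀ i : ℤ, Filter.Tendsto (fun k : ℕ => xs (i - k * q) + k * p)
      Filter.atTop (nhds (xm i)))
    (hlimp : ∀ i : ℤ, Filter.Tendsto (fun k : ℕ => xs (i + k * q) - k * p)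
      Filter.atTop (nhds (xp i))) :
    HasSum (fun i : ℤ => (xs (i + q) - p) - xs i)
      (∑ i ∈ Finset.Icc (1 : ℤ) q, (xp i - xm i)) ∧
      ∀ z : ℤ → ℝ, (∀ n : ℤ, xs n ≤ z n) → (∀ n : ℤ, z n ≤ xs (n + q) - p) →
        Summable (fun i : ℤ => z i - xs i) ∧ Memℓp (fun i : ℤ => z i - xs i) 2 := by
  set f : ℤ → ℝ := fun i => (xs (i + q) - p) - xs i with hf
  have hf0 : ∀ i, 0 ≤ f i := by
    intro i
    have h := hmono (i + q)
    simp only [add_sub_cancel_right] at h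
    simp only [hf]
    linarith
  -- finite telescoping
  have tele : ∀ c d : ℤ, c ≤ d →
      ∑ i ∈ Finset.Ioc c d, f i
        = (∑ i ∈ Finset.Ioc d (d + q), xs i) - (∑ i ∈ Finset.Ioc c (c + q), xs i)
          - ((d : ℝ) - (c : ℝ)) * (p : ℝ) := by
    intro c d hcd
    have hmap : ∑ i ∈ Finset.Ioc c d, xs (i + q) = ∑ i ∈ Finset.Ioc (c + q) (d + q), xs i := by
      rw [← Finset.map_add_right_Ioc, Finset.sum_map]
      rfl
    have hdisj : ∀ a b c' : ℤ, Disjoint (Finset.Ioc a b) (Finset.Ioc b c') := by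
      intro a b c'
      simp only [Finset.disjoint_left, Finset.mem_Ioc]
      omega
    have split : ∀ a b c' : ℤ, a ≤ b → b ≤ c' →
        ∑ i ∈ Finset.Ioc a c', xs i
          = ∑ i ∈ Finset.Ioc a b, xs i + ∑ i ∈ Finset.Ioc b c', xs i := by
      intro a b c' h1 h2
      rw [← Finset.sum_union (hdisj a b c'), Finset.Ioc_union_Ioc_eq_Ioc h1 h2]
    have e1 := split c d (d + q) hcd (by linarith)
    have e2 := split c (c + q) (d + q) (by linarith) (by linarith)
    have hcard : ∑ _i ∈ Finset.Ioc c d, (p : ℝ) = ((d : ℝ) - (c : ℝ)) * (p : ℝ) := by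
      rw [Finset.sum_const, Int.card_Ioc, nsmul_eq_mul]
      congr 1
      exact_mod_cast Int.toNat_of_nonneg (show (0:ℤ) ≤ d - c by omega)
    simp only [hf, Finset.sum_sub_distrib]
    rw [hmap, hcard]
    linarith
  set S : ℕ → ℝ := fun n => ∑ i ∈ Finset.Ioc (-(n : ℤ) * q) ((n : ℤ) * q), f i with hS
  have hSn : ∀ n : ℕ, S n = ∑ i ∈ Finset.Ioc (0 : ℤ) q,
      ((xs (i + (n : ℤ) * q) - (n : ℝ) * (p : ℝ)) - (xs (i - (n : ℤ) * q) + (n : ℝ) * (p : ℝ))) := by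
    intro n
    have hnq : (0 : ℤ) ≤ (n : ℤ) * q := mul_nonneg (Int.natCast_nonneg n) hq.le
    have h1 : ∑ i ∈ Finset.Ioc ((n : ℤ) * q) ((n : ℤ) * q + q), xs i
        = ∑ i ∈ Finset.Ioc (0 : ℤ) q, xs (i + (n : ℤ) * q) := by
      have he : Finset.Ioc ((n : ℤ) * q) ((n : ℤ) * q + q)
          = Finset.Ioc ((0 : ℤ) + (n : ℤ) * q) (q + (n : ℤ) * q) := by congr 1 <;> ring
      rw [he, ← Finset.map_add_right_Ioc, Finset.sum_map]
      rfl
    have h2 : ∑ i ∈ Finset.Ioc (-(n : ℤ) * q) (-(n : ℤ) * q + q), xs i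
        = ∑ i ∈ Finset.Ioc (0 : ℤ) q, xs (i - (n : ℤ) * q) := by
      have he : Finset.Ioc (-(n : ℤ) * q) (-(n : ℤ) * q + q)
          = Finset.Ioc ((0 : ℤ) + -((n : ℤ) * q)) (q + -((n : ℤ) * q)) := by congr 1 <;> ring
      rw [he, ← Finset.map_add_right_Ioc, Finset.sum_map]
      apply Finset.sum_congr rfl
      intro i _
      congr 1
    have hcardq : ((Finset.Ioc (0 : ℤ) q).card : ℝ) = (q : ℝ) := by
      rw [Int.card_Ioc, sub_zero]
      exact_mod_cast Int.toNat_of_nonneg hq.le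
    show ∑ i ∈ Finset.Ioc (-(n : ℤ) * q) ((n : ℤ) * q), f i = _
    rw [tele (-(n : ℤ) * q) ((n : ℤ) * q) (by linarith), h1, h2]
    rw [Finset.sum_sub_distrib, Finset.sum_sub_distrib, Finset.sum_add_distrib]
    simp only [Finset.sum_const, nsmul_eq_mul, hcardq]
    push_cast
    ring
  have hL : Filter.Tendsto S atTop (nhds (∑ i ∈ Finset.Icc (1 : ℤ) q, (xp i - xm i))) := by
    have hIcc : Finset.Icc (1 : ℤ) q = Finset.Ioc 0 q := by
      ext i
      simp only [Finset.mem_Icc, Finset.mem_Ioc]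
      omega
    rw [hIcc, show S = fun n : ℕ => ∑ i ∈ Finset.Ioc (0 : ℤ) q,
      ((xs (i + (n : ℤ) * q) - (n : ℝ) * (p : ℝ)) - (xs (i - (n : ℤ) * q) + (n : ℝ) * (p : ℝ)))
      from funext hSn]
    exact tendsto_finset_sum _ (fun i _ => (hlimp i).sub (hlimm i))
  have hSmono : Monotone S := by
    intro m n hmn
    have hmn' : (m : ℤ) ≤ (n : ℤ) := Int.ofNat_le.mpr hmn
    apply Finset.sum_le_sum_of_subset_of_nonneg
    · apply Finset.Ioc_subset_Ioc
      · nlinarith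
      · nlinarith
    · intro i _ _
      exact hf0 i
  have hub : ∀ n, S n ≤ ∑ i ∈ Finset.Icc (1 : ℤ) q, (xp i - xm i) := fun n =>
    Monotone.ge_of_tendsto hSmono hL n
  have hlub : IsLUB (Set.range fun s : Finset ℤ => ∑ i ∈ s, f i)
      (∑ i ∈ Finset.Icc (1 : ℤ) q, (xp i - xm i)) := by
    constructor
    · rintro y ⟨s, rfl⟩
      obtain ⟨n, hn⟩ : ∃ n : ℕ, s ⊆ Finset.Ioc (-(n : ℤ) * q) ((n : ℤ) * q) := by
        refine ⟨(s.sup fun i => i.natAbs) + 1, ?_⟩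
        intro i hi
        have h1 : i.natAbs ≤ s.sup (fun i => i.natAbs) := Finset.le_sup hi
        have h2 : |i| ≤ ((s.sup fun i => i.natAbs : ℕ) : ℤ) := by
          rw [Int.abs_eq_natAbs]
          exact_mod_cast h1
        set N : ℤ := ((s.sup fun i => i.natAbs : ℕ) : ℤ) with hN
        have hN0 : 0 ≤ N := Int.natCast_nonneg _
        have hNq : N + 1 ≤ (N + 1) * q := le_mul_of_one_le_right (by omega) hq
        have habs := abs_le.mp h2
        simp only [Finset.mem_Ioc]
        push_cast
        constructor <;> nlinarith [habs.1, habs.2]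
      calc ∑ i ∈ s, f i ≤ S n :=
            Finset.sum_le_sum_of_subset_of_nonneg hn (fun i _ _ => hf0 i)
        _ ≤ _ := hub n
    · intro b hb
      exact le_of_tendsto' hL (fun n => hb ⟨_, rfl⟩)
  have hsum : HasSum f (∑ i ∈ Finset.Icc (1 : ℤ) q, (xp i - xm i)) :=
    hasSum_of_isLUB_of_nonneg _ hf0 hlub
  refine ⟨hsum, ?_⟩
  intro z hz1 hz2
  have hg0 : ∀ i, 0 ≤ z i - xs i := fun i => by linarith [hz1 i]
  have hgle : ∀ i, z i - xs i ≤ f i := by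
    intro i
    have := hz2 i
    simp only [hf]
    linarith [hz1 (i + q)]
  have hsummg : Summable (fun i : ℤ => z i - xs i) :=
    Summable.of_nonneg_of_le hg0 hgle hsum.summable
  refine ⟨hsummg, ?_⟩
  apply memℓp_gen
  have hC : ∀ i, f i ≤ ∑ i ∈ Finset.Icc (1 : ℤ) q, (xp i - xm i) := fun i =>
    le_hasSum hsum i (fun j _ => hf0 j)
  set L := ∑ i ∈ Finset.Icc (1 : ℤ) q, (xp i - xm i) with hLdef
  have hmul : Summable (fun i : ℤ => L * (z i - xs i)) := hsummg.mul_left L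
  apply Summable.of_nonneg_of_le (fun i => ?_) (fun i => ?_) hmul
  · positivity
  · have hn : ‖z i - xs i‖ = z i - xs i := Real.norm_of_nonneg (hg0 i)
    rw [hn, show ((2 : ENNReal).toReal) = ((2 : ℕ) : ℝ) from by norm_num,
      Real.rpow_natCast]
    nlinarith [hg0 i, hgle i, hC i]
end

section
/- Let M be a real symmetric tridiagonal n×n matrix whose off-diagonal entries are all strictly positive. If M has a positive eigenvalue, then its largest eigenvalue μ_max > 0 admits an eigenvector ξ ∈ ℝⁿ with ξ_i > 0 for all i. -/
open Module.End Metric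

theorem stmt12 (n : ℕ) (hn : 0 < n) (M : Matrix (Fin n) (Fin n) ℝ)
    (hsymm : M.IsSymm)
    (htri : ∀ i j : Fin n, 1 < ((i : ℤ) - (j : ℤ)).natAbs → M i j = 0)
    (hoff : ∀ i j : Fin n, ((i : ℤ) - (j : ℤ)).natAbs = 1 → 0 < M i j)
    (hpos : ∃ μ : ℝ, 0 < μ ∧ ∃ v : Fin n → ℝ, v ≠ 0 ∧ M.mulVec v = μ • v) :
    ∃ μmax : ℝ, 0 < μmax ∧
      (∃ ξ : Fin n → ℝ, (∀ i, 0 < ξ i) ∧ M.mulVec ξ = μmax • ξ) ∧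
      (∀ μ : ℝ, (∃ v : Fin n → ℝ, v ≠ 0 ∧ M.mulVec v = μ • v) → μ ≤ μmax) := by
  classical
  have hHerm : M.IsHermitian := by
    have h : M.conjTranspose = M.transpose := by
      ext i j; simp [Matrix.conjTranspose_apply]
    rw [Matrix.IsHermitian, h]; exact hsymm
  let T : EuclideanSpace ℝ (Fin n) →ₗ[ℝ] EuclideanSpace ℝ (Fin n) := Matrix.toEuclideanLin M
  have hT : T.IsSymmetric := Matrix.isHermitian_iff_isSymmetric.mp hHerm
  let T' : EuclideanSpace ℝ (Fin n) →L[ℝ] EuclideanSpace ℝ (Fin n) := LinearMap.toContinuousLinearMap T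
  have hT'sa : IsSelfAdjoint T' := hT.toSelfAdjoint.prop
  -- basic application formula
  have happ : ∀ (x : EuclideanSpace ℝ (Fin n)) (i : Fin n), (T' x) i = ∑ j, M i j * x j := by
    intro x i
    show (M.mulVec fun j => x j) i = _
    simp [Matrix.mulVec, dotProduct]
  have key : ∀ x : EuclideanSpace ℝ (Fin n), T'.reApplyInnerSelf x = ∑ i, ∑ j, M i j * x j * x i := by
    intro x
    rw [ContinuousLinearMap.reApplyInnerSelf_apply]
    have h1 : (inner ℝ (T' x) x : ℝ) = ∑ i, (T' x) i * x i := by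
      simp [PiLp.inner_apply, RCLike.inner_apply, conj_trivial, mul_comm]
    rw [show RCLike.re (inner ℝ (T' x) x : ℝ) = (inner ℝ (T' x) x : ℝ) from rfl, h1]
    refine Finset.sum_congr rfl fun i _ => ?_
    rw [happ, Finset.sum_mul]
  -- the supremum of the Rayleigh quotient
  set μmax := ⨆ x : {x : EuclideanSpace ℝ (Fin n) // x ≠ 0}, T'.rayleighQuotient x with hμmax
  have hbdd : BddAbove (Set.range fun x : {x : EuclideanSpace ℝ (Fin n) // x ≠ 0} => T'.rayleighQuotient x) := by
    refine ⟨‖T'‖, ?_⟩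
    rintro r ⟨⟨x, hx⟩, rfl⟩
    have hx' : (0:ℝ) < ‖x‖ := norm_pos_iff.mpr hx
    have h1 : T'.reApplyInnerSelf x ≤ ‖T'‖ * ‖x‖ ^ 2 := by
      rw [ContinuousLinearMap.reApplyInnerSelf_apply]
      calc RCLike.re (inner ℝ (T' x) x : ℝ) = (inner ℝ (T' x) x : ℝ) := rfl
        _ ≤ ‖(inner ℝ (T' x) x : ℝ)‖ := le_abs_self _
        _ ≤ ‖T' x‖ * ‖x‖ := norm_inner_le_norm _ _
        _ ≤ ‖T'‖ * ‖x‖ * ‖x‖ := by gcongr; exact T'.le_opNorm x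
        _ = ‖T'‖ * ‖x‖ ^ 2 := by ring
    have h2 : (0:ℝ) < ‖x‖ ^ 2 := by positivity
    show T'.reApplyInnerSelf x / ‖x‖ ^ 2 ≤ ‖T'‖
    rw [div_le_iff₀ h2]
    exact h1
  -- every eigenvalue is at most μmax
  have hub : ∀ μ : ℝ, (∃ u : Fin n → ℝ, u ≠ 0 ∧ M.mulVec u = μ • u) → μ ≤ μmax := by
    rintro μ ⟨u, hu, hMu⟩
    set x : EuclideanSpace ℝ (Fin n) := (WithLp.equiv 2 (Fin n → ℝ)).symm u with hxdef
    have hx_ne : x ≠ 0 := by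
      intro h
      apply hu
      have := congrArg (WithLp.equiv 2 (Fin n → ℝ)) h
      simpa [hxdef] using this
    have hxpos : (0:ℝ) < ‖x‖ := norm_pos_iff.mpr hx_ne
    have hTx : T' x = μ • x := by
      show T x = μ • x
      rw [show T x = (WithLp.equiv 2 (Fin n → ℝ)).symm (M.mulVec u) from rfl, hMu]
      simp [hxdef]
    have hquot : T'.rayleighQuotient x = μ := by
      rw [ContinuousLinearMap.rayleighQuotient, ContinuousLinearMap.reApplyInnerSelf_apply, hTx]
      rw [show RCLike.re (inner ℝ (μ • x) x : ℝ) = (inner ℝ (μ • x) x : ℝ) from rfl]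
      rw [real_inner_smul_left, real_inner_self_eq_norm_sq]
      field_simp
    calc μ = T'.rayleighQuotient x := hquot.symm
      _ ≤ μmax := le_ciSup hbdd ⟨x, hx_ne⟩
  -- positivity of μmax
  obtain ⟨μ₀, hμ₀, u₀, hu₀, hMu₀⟩ := hpos
  have hμmax_pos : 0 < μmax := lt_of_lt_of_le hμ₀ (hub μ₀ ⟨u₀, hu₀, hMu₀⟩)
  -- max point on the unit sphere
  have hsne : (sphere (0:EuclideanSpace ℝ (Fin n)) 1).Nonempty := by
    refine ⟨EuclideanSpace.single ⟨0, hn⟩ (1:ℝ), ?_⟩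
    rw [mem_sphere_zero_iff_norm, EuclideanSpace.norm_single]
    norm_num
  obtain ⟨v, hv_mem, hv_max⟩ := (isCompact_sphere (0:EuclideanSpace ℝ (Fin n)) 1).exists_isMaxOn hsne
    T'.reApplyInnerSelf_continuous.continuousOn
  have hvnorm : ‖v‖ = 1 := by simpa [mem_sphere_zero_iff_norm] using hv_mem
  -- the absolute-value vector
  set w : Fin n → ℝ := fun i => |v i| with hwdef
  set W : EuclideanSpace ℝ (Fin n) := (WithLp.equiv 2 (Fin n → ℝ)).symm w with hWdef
  have hWi : ∀ i, (W : EuclideanSpace ℝ (Fin n)) i = w i := fun i => rfl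
  have hWnorm : ‖W‖ = 1 := by
    rw [← hvnorm, EuclideanSpace.norm_eq, EuclideanSpace.norm_eq]
    congr 1
    refine Finset.sum_congr rfl fun i _ => ?_
    rw [hWi]
    simp [hwdef, Real.norm_eq_abs, abs_abs]
  have hW_ne : W ≠ 0 := by
    intro h
    rw [h] at hWnorm
    simp at hWnorm
  -- the quadratic form does not decrease when passing to absolute values
  have hinner_ge : T'.reApplyInnerSelf v ≤ T'.reApplyInnerSelf W := by
    rw [key, key]
    refine Finset.sum_le_sum fun i _ => Finset.sum_le_sum fun j _ => ?_
    rw [hWi, hWi]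
    have hd : ((i : ℤ) - (j : ℤ)).natAbs = 0 ∨ ((i : ℤ) - (j : ℤ)).natAbs = 1 ∨
        1 < ((i : ℤ) - (j : ℤ)).natAbs := by omega
    rcases hd with h1 | h1 | h
    · -- i = j
      have hij : i = j := by
        have := Int.natAbs_eq_zero.mp h1
        have := sub_eq_zero.mp this
        exact Fin.ext (by exact_mod_cast this)
      subst hij
      have : v i * v i = w i * w i := by simp [hwdef, abs_mul_abs_self]
      rw [mul_assoc, mul_assoc, this]
    · -- |i - j| = 1
      have hMij : 0 < M i j := hoff i j h1
      have : v j * v i ≤ w j * w i := by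
        calc v j * v i ≤ |v j * v i| := le_abs_self _
          _ = |v j| * |v i| := abs_mul _ _
      nlinarith
    · rw [htri i j h]; ring_nf; exact le_refl _
  -- W is also a max point on its sphere
  have hW_max : IsMaxOn T'.reApplyInnerSelf (sphere (0:EuclideanSpace ℝ (Fin n)) ‖W‖) W := by
    intro x hx
    have hx1 : x ∈ sphere (0:EuclideanSpace ℝ (Fin n)) 1 := by
      rw [mem_sphere_zero_iff_norm] at hx ⊢
      rw [hx, hWnorm]
    exact le_trans (hv_max hx1) hinner_ge
  have hWev := hT'sa.hasEigenvector_of_isMaxOn hW_ne hW_max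
  have hTW : T W = μmax • W := hWev.apply_eq_smul
  -- translate back to the matrix statement
  have hMw : M.mulVec w = μmax • w := by
    funext i
    have := (happ W i).symm.trans (congrArg (fun z : EuclideanSpace ℝ (Fin n) => z i) hTW)
    simpa [Matrix.mulVec, dotProduct, happ, hWi] using this
  -- positivity of the entries of w
  have hstep : ∀ i j : Fin n, w i = 0 → ((i : ℤ) - (j : ℤ)).natAbs = 1 → w j = 0 := by
    intro i j hwi hij
    have hwnn : ∀ k, 0 ≤ w k := fun k => abs_nonneg _
    have h0 : ∑ k, M i k * w k = 0 := by
      have h := congrFun hMw i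
      have h2 : M.mulVec w i = ∑ k, M i k * w k := by simp [Matrix.mulVec, dotProduct]
      rw [h2] at h
      rw [h]
      simp [Pi.smul_apply, hwi]
    have hnonneg : ∀ k ∈ Finset.univ, (0:ℝ) ≤ M i k * w k := by
      intro k _
      rcases eq_or_ne k i with rfl | hki
      · simp [hwi]
      · have hne : ((i : ℤ) - (k : ℤ)).natAbs ≠ 0 := by
          intro h
          apply hki
          have := Int.natAbs_eq_zero.mp h
          have := sub_eq_zero.mp this
          exact Fin.ext (by exact_mod_cast this.symm)
        have hd : ((i : ℤ) - (k : ℤ)).natAbs = 1 ∨ 1 < ((i : ℤ) - (k : ℤ)).natAbs := by omega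
        rcases hd with h1 | h
        · exact mul_nonneg (hoff i k h1).le (hwnn k)
        · rw [htri i k h]; simp
    have hterm := (Finset.sum_eq_zero_iff_of_nonneg hnonneg).mp h0 j (Finset.mem_univ j)
    exact (mul_eq_zero.mp hterm).resolve_left (hoff i j hij).ne'
  have hzero_all : (∃ i, w i = 0) → ∀ j, w j = 0 := by
    rintro ⟨i, hi⟩
    have hdown : ∀ k : ℕ, ∀ h : k < n, w ⟨k, h⟩ = 0 → w ⟨0, hn⟩ = 0 := by
      intro k
      induction k with
      | zero => intro h h0; exact h0
      | succ m ih =>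
        intro h hk
        have hm : m < n := Nat.lt_of_succ_lt h
        refine ih hm ?_
        refine hstep ⟨m + 1, h⟩ ⟨m, hm⟩ hk ?_
        simp
    have h0 : w ⟨0, hn⟩ = 0 := by
      refine hdown i.val i.isLt ?_
      simpa using hi
    have hup : ∀ k : ℕ, ∀ h : k < n, w ⟨k, h⟩ = 0 := by
      intro k
      induction k with
      | zero => intro h; exact h0
      | succ m ih =>
        intro h
        have hm : m < n := Nat.lt_of_succ_lt h
        refine hstep ⟨m, hm⟩ ⟨m + 1, h⟩ (ih hm) ?_
        simp
    intro j
    simpa using hup j.val j.isLt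
  have hwpos : ∀ i, 0 < w i := by
    intro i
    rcases (abs_nonneg (v i)).lt_or_eq with h | h
    · exact h
    · exfalso
      have hall := hzero_all ⟨i, h.symm⟩
      have hv0 : ‖v‖ = 0 := by
        rw [EuclideanSpace.norm_eq]
        have hvi : ∀ i, ‖v i‖ = 0 := fun i => by
          rw [Real.norm_eq_abs]
          exact hall i
        simp [hvi]
      rw [hvnorm] at hv0
      norm_num at hv0
  exact ⟨μmax, hμmax_pos, ⟨w, hwpos, hMw⟩, hub⟩
end

section
/- Let ω ∈ ℝ and let x : ℤ → ℝ be a configuration such that the set of translates {T_{q,p} x : p, q ∈ ℤ} is totally ordered (x is Birkhoff) and suppose x has mean spacing ω, i.e., (x_n − x₀)/n → ω as n → ±∞. Then for all integers p, q with q > 0: if p/q < ω then T_{q,p} x ≤ x, and if p/q > ω then T_{q,p} x ≥ x. Consequently |x_n − x₀ − nω| ≤ 1 for all n, i.e., n ↦ x_n − nω is bounded. -/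
private lemma iter_up (x : ℤ → ℝ) (q p : ℤ) (h : ∀ n : ℤ, x n ≤ x (n - q) + p) :
    ∀ k : ℕ, x ((k : ℤ) * q) ≤ x 0 + (k : ℝ) * (p : ℝ) := by
  intro k
  induction k with
  | zero => simp
  | succ k ih =>
    have h1 := h (((k : ℤ) + 1) * q)
    have e : ((k : ℤ) + 1) * q - q = (k : ℤ) * q := by ring
    rw [e] at h1
    push_cast
    push_cast at ih
    linarith

private lemma iter_lo (x : ℤ → ℝ) (q p : ℤ) (h : ∀ n : ℤ, x (n - q) + p ≤ x n) :
    ∀ k : ℕ, x 0 + (k : ℝ) * (p : ℝ) ≤ x ((k : ℤ) * q) := by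
  intro k
  induction k with
  | zero => simp
  | succ k ih =>
    have h1 := h (((k : ℤ) + 1) * q)
    have e : ((k : ℤ) + 1) * q - q = (k : ℤ) * q := by ring
    rw [e] at h1
    push_cast
    push_cast at ih
    linarith

private lemma mean_le (x : ℤ → ℝ) (ω : ℝ) (q p : ℤ) (hq : 0 < q)
    (hmeanp : Filter.Tendsto (fun n : ℕ => (x n - x 0) / n) Filter.atTop (nhds ω))
    (h : ∀ n : ℤ, x n ≤ x (n - q) + p) : ω ≤ (p : ℝ) / q := by
  have hqt : 0 < q.toNat := by omega
  have hcomp : Filter.Tendsto (fun k : ℕ => k * q.toNat) Filter.atTop Filter.atTop := by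
    apply Filter.tendsto_atTop_mono (fun k => Nat.le_mul_of_pos_right k hqt)
    exact Filter.tendsto_id
  have htend := hmeanp.comp hcomp
  apply le_of_tendsto htend
  filter_upwards [Filter.eventually_ge_atTop 1] with k hk
  simp only [Function.comp_apply]
  have hcast : ((k * q.toNat : ℕ) : ℤ) = (k : ℤ) * q := by
    push_cast [Int.toNat_of_nonneg hq.le]; ring
  have hx := iter_up x q p h k
  rw [← hcast] at hx
  have hk0 : (0 : ℝ) < k := by exact_mod_cast hk
  have hq0 : (0 : ℝ) < q := by exact_mod_cast hq
  have hdeneq : ((k * q.toNat : ℕ) : ℝ) = (k : ℝ) * (q : ℝ) := by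
    rw [Nat.cast_mul]; congr 1; exact_mod_cast Int.toNat_of_nonneg hq.le
  have hden : (0 : ℝ) < ((k * q.toNat : ℕ) : ℝ) := by rw [hdeneq]; positivity
  rw [div_le_div_iff₀ hden hq0, hdeneq]
  nlinarith [hx, hq0, hk0]

private lemma mean_ge (x : ℤ → ℝ) (ω : ℝ) (q p : ℤ) (hq : 0 < q)
    (hmeanp : Filter.Tendsto (fun n : ℕ => (x n - x 0) / n) Filter.atTop (nhds ω))
    (h : ∀ n : ℤ, x (n - q) + p ≤ x n) : (p : ℝ) / q ≤ ω := by
  have hqt : 0 < q.toNat := by omega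
  have hcomp : Filter.Tendsto (fun k : ℕ => k * q.toNat) Filter.atTop Filter.atTop := by
    apply Filter.tendsto_atTop_mono (fun k => Nat.le_mul_of_pos_right k hqt)
    exact Filter.tendsto_id
  have htend := hmeanp.comp hcomp
  apply ge_of_tendsto htend
  filter_upwards [Filter.eventually_ge_atTop 1] with k hk
  simp only [Function.comp_apply]
  have hcast : ((k * q.toNat : ℕ) : ℤ) = (k : ℤ) * q := by
    push_cast [Int.toNat_of_nonneg hq.le]; ring
  have hx := iter_lo x q p h k
  rw [← hcast] at hx
  have hk0 : (0 : ℝ) < k := by exact_mod_cast hk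
  have hq0 : (0 : ℝ) < q := by exact_mod_cast hq
  have hdeneq : ((k * q.toNat : ℕ) : ℝ) = (k : ℝ) * (q : ℝ) := by
    rw [Nat.cast_mul]; congr 1; exact_mod_cast Int.toNat_of_nonneg hq.le
  have hden : (0 : ℝ) < ((k * q.toNat : ℕ) : ℝ) := by rw [hdeneq]; positivity
  rw [div_le_div_iff₀ hq0 hden, hdeneq]
  nlinarith [hx, hq0, hk0]

theorem stmt18 (x : ℤ → ℝ) (ω : ℝ)
    (hBirk : ∀ q p : ℤ, (∀ n : ℤ, x (n - q) + p ≤ x n) ∨ (∀ n : ℤ, x n ≤ x (n - q) + p))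
    (hmeanp : Filter.Tendsto (fun n : ℕ => (x n - x 0) / n) Filter.atTop (nhds ω))
    (hmeanm : Filter.Tendsto (fun n : ℕ => (x (-(n : ℤ)) - x 0) / (-(n : ℝ)))
      Filter.atTop (nhds ω)) :
    (∀ p q : ℤ, 0 < q → (p : ℝ) / q < ω → ∀ n : ℤ, x (n - q) + p ≤ x n) ∧
      (∀ p q : ℤ, 0 < q → ω < (p : ℝ) / q → ∀ n : ℤ, x n ≤ x (n - q) + p) ∧
      (∀ n : ℤ, |x n - x 0 - n * ω| ≤ 1) := by
  have h1 : ∀ p q : ℤ, 0 < q → (p : ℝ) / q < ω → ∀ n : ℤ, x (n - q) + p ≤ x n := by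
    intro p q hq hpq
    rcases hBirk q p with h | h
    · exact h
    · exact absurd (mean_le x ω q p hq hmeanp h) (not_le.mpr hpq)
  have h2 : ∀ p q : ℤ, 0 < q → ω < (p : ℝ) / q → ∀ n : ℤ, x n ≤ x (n - q) + p := by
    intro p q hq hpq
    rcases hBirk q p with h | h
    · exact absurd (mean_ge x ω q p hq hmeanp h) (not_le.mpr hpq)
    · exact h
  refine ⟨h1, h2, ?_⟩
  intro n
  rcases lt_trichotomy n 0 with hn | hn | hn
  · -- n < 0, q = -n
    have hq : (0 : ℤ) < -n := by omega
    have hq0 : (0 : ℝ) < (-n : ℤ) := by exact_mod_cast hq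
    have hnr : ((-n : ℤ) : ℝ) = -(n : ℝ) := by push_cast; ring
    -- upper bound: p = ⌈-nω⌉ - 1 < -nω
    have hub : x n - x 0 - n * ω ≤ 1 := by
      set p : ℤ := ⌈-(n : ℝ) * ω⌉ - 1 with hp
      have hplt : (p : ℝ) < -(n : ℝ) * ω := by
        rw [hp]; push_cast
        have := Int.ceil_lt_add_one (-(n : ℝ) * ω)
        linarith
      have hpge : -(n : ℝ) * ω - 1 ≤ (p : ℝ) := by
        rw [hp]; push_cast
        have := Int.le_ceil (-(n : ℝ) * ω)
        linarith
      have hcond : (p : ℝ) / ((-n : ℤ) : ℝ) < ω := by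
        rw [div_lt_iff₀ hq0, hnr]; linarith
      have := h1 p (-n) hq hcond 0
      rw [show (0 : ℤ) - -n = n by ring] at this
      linarith
    have hlb : -1 ≤ x n - x 0 - n * ω := by
      set p : ℤ := ⌊-(n : ℝ) * ω⌋ + 1 with hp
      have hpgt : -(n : ℝ) * ω < (p : ℝ) := by
        rw [hp]; push_cast
        have := Int.lt_floor_add_one (-(n : ℝ) * ω)
        linarith
      have hple : (p : ℝ) ≤ -(n : ℝ) * ω + 1 := by
        rw [hp]; push_cast
        have := Int.floor_le (-(n : ℝ) * ω)
        linarith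
      have hcond : ω < (p : ℝ) / ((-n : ℤ) : ℝ) := by
        rw [lt_div_iff₀ hq0, hnr]; linarith
      have := h2 p (-n) hq hcond 0
      rw [show (0 : ℤ) - -n = n by ring] at this
      linarith
    rw [abs_le]; exact ⟨hlb, hub⟩
  · subst hn; simp
  · -- n > 0, q = n
    have hq0 : (0 : ℝ) < (n : ℝ) := by exact_mod_cast hn
    have hub : x n - x 0 - n * ω ≤ 1 := by
      set p : ℤ := ⌊(n : ℝ) * ω⌋ + 1 with hp
      have hpgt : (n : ℝ) * ω < (p : ℝ) := by
        rw [hp]; push_cast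
        have := Int.lt_floor_add_one ((n : ℝ) * ω)
        linarith
      have hple : (p : ℝ) ≤ (n : ℝ) * ω + 1 := by
        rw [hp]; push_cast
        have := Int.floor_le ((n : ℝ) * ω)
        linarith
      have hcond : ω < (p : ℝ) / (n : ℝ) := by
        rw [lt_div_iff₀ hq0]; linarith
      have := h2 p n hn hcond n
      rw [show n - n = 0 by ring] at this
      linarith
    have hlb : -1 ≤ x n - x 0 - n * ω := by
      set p : ℤ := ⌈(n : ℝ) * ω⌉ - 1 with hp
      have hplt : (p : ℝ) < (n : ℝ) * ω := by
        rw [hp]; push_cast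
        have := Int.ceil_lt_add_one ((n : ℝ) * ω)
        linarith
      have hpge : (n : ℝ) * ω - 1 ≤ (p : ℝ) := by
        rw [hp]; push_cast
        have := Int.le_ceil ((n : ℝ) * ω)
        linarith
      have hcond : (p : ℝ) / (n : ℝ) < ω := by
        rw [div_lt_iff₀ hq0]; linarith
      have := h1 p n hn hcond n
      rw [show n - n = 0 by ring] at this
      linarith
    rw [abs_le]; exact ⟨hlb, hub⟩
end
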